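/- arXiv:2402.13810 — 6 statements merged into one kernel-verified Lean document; each statement's English description precedes it below -/
import Mathlib

section
/- For every n ≥ 1, all n×n real matrices G, Σ, H and every t ≥ 0, one has (1/2)·∫₀ᵗ Tr(H · exp(−2(t−s)·(G·H)) · G·Σ·G) ds = (1/4)·Tr(G·Σ) − (1/4)·Tr(G·Σ · exp(−2t·(G·H))). (This is the closed-form expression for the expected loss of preconditioned Langevin dynamics near a stationary point, Theorem 1.) -/
open Matrix MeasureTheory

attribute [local instance] Matrix.linftyOpNormedRing Matrix.linftyOpNormedAlgebra

/-- Theorem 1 (Expected loss over time): closed-form expression for the expected loss of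
preconditioned Langevin dynamics near a stationary point. -/
theorem expected_loss_over_time (n : ℕ) (hn : 1 ≤ n)
    (G Sg H : Matrix (Fin n) (Fin n) ℝ) (t : ℝ) (ht : 0 ≤ t) :
    (1 / 2) * ∫ s in Set.Icc (0 : ℝ) t,
        Matrix.trace (H * NormedSpace.exp ((-(2 * (t - s))) • (G * H)) * (G * Sg * G)) =
      (1 / 4) * Matrix.trace (G * Sg) -
        (1 / 4) * Matrix.trace (G * Sg * NormedSpace.exp ((-(2 * t)) • (G * H))) := by
  set A := G * H with hA
  set E : ℝ → Matrix (Fin n) (Fin n) ℝ :=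
    fun s => NormedSpace.exp ((-(2 * (t - s))) • A) with hE
  -- derivative of E
  have hE' : ∀ s : ℝ, HasDerivAt E ((2:ℝ) • (E s * A)) s := by
    intro s
    have hu : HasDerivAt (fun s : ℝ => -(2 * (t - s))) 2 s := by
      have : HasDerivAt (fun s : ℝ => 2 * s - 2 * t) 2 s := by
        simpa using ((hasDerivAt_id s).const_mul 2).sub_const (2 * t)
      convert this using 2 with x
      ring
    have := (hasDerivAt_exp_smul_const (𝕂 := ℝ) A (-(2 * (t - s)))).scomp s hu
    simp only [Function.comp_def] at this
    exact this
  -- E s commutes with A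
  have hcomm : ∀ s : ℝ, E s * A = A * E s := by
    intro s
    exact (((Commute.refl A).smul_left (-(2 * (t - s)))).exp_left).eq
  -- integrand equals trace (G * Sg * (E s * A))
  have hint : ∀ s : ℝ,
      Matrix.trace (H * E s * (G * Sg * G)) = Matrix.trace (G * Sg * ((2:ℝ) • (E s * A))) / 2 := by
    intro s
    rw [Matrix.trace_mul_cycle]
    rw [Matrix.mul_smul, Matrix.trace_smul]
    rw [hcomm s]
    simp only [hA]
    rw [show G * Sg * (G * H * E s) = G * Sg * G * H * E s by noncomm_ring]
    rw [smul_eq_mul]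
    ring
  -- bundled trace ∘ left-mul map
  let L : Matrix (Fin n) (Fin n) ℝ →L[ℝ] ℝ :=
    LinearMap.toContinuousLinearMap
      ((Matrix.traceLinearMap (Fin n) ℝ ℝ).comp (LinearMap.mulLeft ℝ (G * Sg)))
  have hL : ∀ M, L M = Matrix.trace (G * Sg * M) := fun M => rfl
  have hF : ∀ s : ℝ, HasDerivAt (fun s => (1/2 : ℝ) * L (E s))
      (Matrix.trace (H * E s * (G * Sg * G))) s := by
    intro s
    have := ((L.hasFDerivAt.comp_hasDerivAt s (hE' s)).const_mul (1/2 : ℝ))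
    refine this.congr_deriv ?_
    rw [hint s]
    change (1/2 : ℝ) * Matrix.trace (G * Sg * ((2:ℝ) • (E s * A))) = _
    ring
  -- continuity of the integrand
  have hEc : Continuous E := by
    apply NormedSpace.exp_continuous.comp
    exact (by continuity : Continuous fun s : ℝ => -(2 * (t - s))).smul continuous_const
  have hintc : Continuous fun s => Matrix.trace (H * E s * (G * Sg * G)) := by
    have : Continuous fun s => H * E s * (G * Sg * G) :=
      (continuous_const.matrix_mul hEc).matrix_mul continuous_const
    exact this.matrix_trace
  have key : ∫ s in (0:ℝ)..t, Matrix.trace (H * E s * (G * Sg * G))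
      = (1/2 : ℝ) * L (E t) - (1/2 : ℝ) * L (E 0) :=
    intervalIntegral.integral_eq_sub_of_hasDerivAt (fun s _ => hF s)
      (hintc.intervalIntegrable 0 t)
  have hIcc : ∫ s in Set.Icc (0 : ℝ) t, Matrix.trace (H * E s * (G * Sg * G))
      = ∫ s in (0:ℝ)..t, Matrix.trace (H * E s * (G * Sg * G)) := by
    rw [intervalIntegral.integral_of_le ht, MeasureTheory.integral_Icc_eq_integral_Ioc]
  rw [hIcc, key, hL, hL]
  have hEt : E t = 1 := by
    simp [hE, NormedSpace.exp_zero]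
  have hE0 : E 0 = NormedSpace.exp ((-(2 * t)) • A) := by
    norm_num [hE]
  rw [hEt, hE0, Matrix.mul_one]
  ring
end

section
/- Let G and H be symmetric positive definite n×n real matrices and let Σ be any n×n real matrix. Then as t → ∞, the function t ↦ (1/4)·Tr(Σ·G·(I − exp(−2t·(G·H)))) converges to (1/4)·Tr(Σ·G). (Corollary: expected loss for PD Hessian.) -/
open Matrix Filter

lemma aux_tendsto_exp_posDef {n : ℕ} {M : Matrix (Fin n) (Fin n) ℝ} (hM : M.PosDef) :
    Tendsto (fun t : ℝ => NormedSpace.exp ((-(2 * t)) • M)) atTop (nhds 0) := by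
  have hHerm := hM.isHermitian
  set U : Matrix (Fin n) (Fin n) ℝ := (hHerm.eigenvectorUnitary : Matrix (Fin n) (Fin n) ℝ)
    with hU
  have hUstar : star U * U = 1 := hHerm.eigenvectorUnitary.2.1
  have hUstar' : U * star U = 1 := hHerm.eigenvectorUnitary.2.2
  have hUinv : U⁻¹ = star U := Matrix.inv_eq_left_inv hUstar
  have hUisUnit : IsUnit U := ⟨⟨U, star U, hUstar', hUstar⟩, rfl⟩
  have key : ∀ t : ℝ, NormedSpace.exp ((-(2 * t)) • M) =
      U * Matrix.diagonal (fun i => Real.exp ((-(2 * t)) * hHerm.eigenvalues i)) * U⁻¹ := by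
    intro t
    have h1 : (-(2 * t)) • M =
        U * ((-(2 * t)) • Matrix.diagonal (RCLike.ofReal ∘ hHerm.eigenvalues)) * U⁻¹ := by
      conv_lhs => rw [hHerm.spectral_theorem]
      rw [hUinv]
      simp [Matrix.smul_mul, Matrix.mul_smul, hU]
    rw [h1, Matrix.exp_conj U _ hUisUnit]
    congr 2
    rw [← Matrix.diagonal_smul, Matrix.exp_diagonal]
    congr 1
    funext i
    simp [Pi.exp_def, ← Real.exp_eq_exp_ℝ]
  simp only [key]
  have hcont : Continuous (fun v : Fin n → ℝ => U * Matrix.diagonal v * U⁻¹) :=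
    (continuous_const.matrix_mul continuous_id.matrix_diagonal).matrix_mul continuous_const
  have hv : Tendsto (fun t : ℝ => fun i => Real.exp ((-(2 * t)) * hHerm.eigenvalues i))
      atTop (nhds 0) := by
    refine tendsto_pi_nhds.2 fun i => ?_
    simp only [Pi.zero_apply]
    have hpos : 0 < hHerm.eigenvalues i := hM.eigenvalues_pos i
    have h2 : Tendsto (fun t : ℝ => (-(2 * t)) * hHerm.eigenvalues i) atTop atBot := by
      apply Tendsto.atBot_mul_const hpos
      exact tendsto_neg_atBot_iff.2 (tendsto_id.const_mul_atTop two_pos)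
    exact Real.tendsto_exp_atBot.comp h2
  have h0 : U * Matrix.diagonal (0 : Fin n → ℝ) * U⁻¹ = 0 := by
    have e : (0 : Fin n → ℝ) = fun _ => 0 := rfl
    rw [e, Matrix.diagonal_zero, Matrix.mul_zero, Matrix.zero_mul]
  have := (hcont.tendsto 0).comp hv
  rw [h0] at this
  exact this

/-- Corollary (Expected loss for PD Hessian): for symmetric positive definite `G` and `H`,
`(1/4)·Tr(Σ·G·(I − exp(−2t·(G·H)))) → (1/4)·Tr(Σ·G)` as `t → ∞`. -/
theorem expected_loss_PD_hessian (n : ℕ) (hn : 1 ≤ n)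
    (G H Sg : Matrix (Fin n) (Fin n) ℝ) (hG : G.PosDef) (hH : H.PosDef) :
    Tendsto
      (fun t : ℝ =>
        (1 / 4) * Matrix.trace (Sg * G * (1 - NormedSpace.exp ((-(2 * t)) • (G * H)))))
      atTop (nhds ((1 / 4) * Matrix.trace (Sg * G))) := by
  classical
  obtain ⟨S, hSsa, -, hSS⟩ := open MatrixOrder in
    CFC.exists_sqrt_of_isSelfAdjoint_of_quasispectrumRestricts hG.isHermitian
      (QuasispectrumRestricts.nnreal_of_nonneg hG.posSemidef.nonneg)
  have hSherm : Sᴴ = S := hSsa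
  have hSunit : IsUnit S := by
    have hdet : S.det * S.det = G.det := by rw [← Matrix.det_mul, hSS]
    have : S.det ≠ 0 := by
      intro h; rw [h, mul_zero] at hdet; exact hG.det_pos.ne hdet
    exact (Matrix.isUnit_iff_isUnit_det S).2 this.isUnit
  have hSinv : S * S⁻¹ = 1 := Matrix.mul_nonsing_inv S ((Matrix.isUnit_iff_isUnit_det S).1 hSunit)
  have hM : (S * H * S).PosDef := by
    refine Matrix.PosDef.of_dotProduct_mulVec_pos ?_ ?_
    · show (S * H * S)ᴴ = S * H * S
      rw [Matrix.conjTranspose_mul, Matrix.conjTranspose_mul, hSherm, hH.1.eq, Matrix.mul_assoc]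
    · intro x hx
      have hinj : Function.Injective (S.mulVec) :=
        Matrix.mulVec_injective_iff_isUnit.2 hSunit
      have hSx : S *ᵥ x ≠ 0 := fun h => hx (hinj (by simpa using h))
      have heq : star x ⬝ᵥ ((S * H * S) *ᵥ x) = star (S *ᵥ x) ⬝ᵥ (H *ᵥ (S *ᵥ x)) := by
        rw [← Matrix.mulVec_mulVec, ← Matrix.mulVec_mulVec,
          dotProduct_mulVec (star x) S, star_mulVec, hSherm,
          dotProduct_mulVec, dotProduct_mulVec]
      rw [heq]; exact hH.dotProduct_mulVec_pos hSx
  have hconj : S * (S * H * S) * S⁻¹ = G * H := by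
    calc S * (S * H * S) * S⁻¹ = S * (S * (H * (S * S⁻¹))) := by
          simp only [Matrix.mul_assoc]
      _ = S * (S * H) := by rw [hSinv, Matrix.mul_one]
      _ = G * H := by rw [← Matrix.mul_assoc, hSS]
  have hexp : ∀ t : ℝ, NormedSpace.exp ((-(2 * t)) • (G * H)) =
      S * NormedSpace.exp ((-(2 * t)) • (S * H * S)) * S⁻¹ := by
    intro t
    rw [← Matrix.exp_conj S _ hSunit]
    congr 1
    rw [← hconj]
    simp [Matrix.mul_smul, Matrix.smul_mul]
  have hE := aux_tendsto_exp_posDef hM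
  have hcont : Continuous (fun A : Matrix (Fin n) (Fin n) ℝ =>
      (1 / 4 : ℝ) * Matrix.trace (Sg * G * (1 - S * A * S⁻¹))) := by
    refine continuous_const.mul (Continuous.matrix_trace ?_)
    exact continuous_const.matrix_mul (continuous_const.sub
      ((continuous_const.matrix_mul continuous_id).matrix_mul continuous_const))
  have hcomp := (hcont.tendsto 0).comp hE
  simp only [Function.comp_def] at hcomp
  simp only [hexp]
  simpa using hcomp
end

section
/- Let G be a symmetric positive definite n×n real matrix, H a symmetric positive semidefinite n×n real matrix, σ > 0 a real number, and set Σ = σ²·G⁻¹ (so that Σ·G = σ²·I). Then as t → ∞, the function t ↦ (4/σ²)·(1/4)·Tr(Σ·G·(I − exp(−2t·(G·H)))) converges to rank(H), the rank of H viewed as a real number. (Corollary 3: expected loss and Hessian rank.) -/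
open Matrix Filter

lemma aux_trace_exp_tendsto (n : ℕ) (M : Matrix (Fin n) (Fin n) ℝ) (hM : M.PosSemidef) :
    Tendsto (fun t : ℝ => Matrix.trace (NormedSpace.exp ((-(2 * t)) • M))) atTop
      (nhds ((n : ℝ) - M.rank)) := by
  classical
  have hH := hM.1
  set U : Matrix (Fin n) (Fin n) ℝ := (hH.eigenvectorUnitary : Matrix (Fin n) (Fin n) ℝ) with hU
  set μ : Fin n → ℝ := hH.eigenvalues with hμ
  have hmem : U ∈ Matrix.unitaryGroup (Fin n) ℝ := (hH.eigenvectorUnitary).2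
  have hUU : U * star U = 1 := Matrix.mem_unitaryGroup_iff.mp hmem
  have hUU' : star U * U = 1 := Matrix.mem_unitaryGroup_iff'.mp hmem
  have hUinv : U⁻¹ = star U := Matrix.inv_eq_left_inv hUU'
  have hUunit : IsUnit U := by
    refine (Matrix.isUnit_iff_isUnit_det U).mpr (IsUnit.of_mul_eq_one (star U).det ?_)
    rw [← Matrix.det_mul, hUU, Matrix.det_one]
  have spec : M = U * Matrix.diagonal μ * U⁻¹ := by
    rw [hUinv]
    have := hH.spectral_theorem
    simpa [RCLike.ofReal_real_eq_id, Function.comp] using this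
  have key : ∀ t : ℝ, Matrix.trace (NormedSpace.exp ((-(2 * t)) • M))
      = ∑ i, Real.exp ((-(2 * t)) * μ i) := by
    intro t
    have h1 : (-(2 * t)) • M = U * ((-(2 * t)) • Matrix.diagonal μ) * U⁻¹ := by
      rw [spec, Matrix.mul_smul, Matrix.smul_mul]
    have h2 : (-(2 * t)) • Matrix.diagonal μ
        = Matrix.diagonal (fun i => (-(2 * t)) * μ i) := by
      rw [← Matrix.diagonal_smul]
      congr 1
    rw [h1, Matrix.exp_conj U _ hUunit, h2, Matrix.exp_diagonal]
    rw [Matrix.trace_mul_cycle, hUinv, hUU', one_mul, Matrix.trace_diagonal]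
    refine Finset.sum_congr rfl fun i _ => ?_
    rw [Pi.exp_def, ← Real.exp_eq_exp_ℝ]
  have hrank : M.rank = Fintype.card {i // μ i ≠ 0} := hH.rank_eq_card_non_zero_eigs
  have hcard : Fintype.card {i // μ i ≠ 0} + Fintype.card {i // μ i = 0} = n := by
    have h1 := Fintype.card_subtype_compl (fun i : Fin n => μ i = 0)
    have hle : Fintype.card {i // μ i = 0} ≤ Fintype.card (Fin n) :=
      Fintype.card_subtype_le _
    simp only [ne_eq, Fintype.card_fin] at h1 hle ⊢
    omega
  have hval : ((n : ℝ) - M.rank) = ∑ i : Fin n, (if μ i = 0 then (1 : ℝ) else 0) := by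
    rw [Finset.sum_boole]
    have : (Finset.univ.filter (fun i => μ i = 0)).card = Fintype.card {i // μ i = 0} :=
      (Fintype.card_subtype _).symm
    rw [this, hrank]
    have hc : ((Fintype.card {i // μ i ≠ 0} : ℝ) + (Fintype.card {i // μ i = 0} : ℝ)) = (n : ℝ) := by
      exact_mod_cast congrArg (Nat.cast : ℕ → ℝ) hcard
    linarith
  simp only [key]
  rw [hval]
  refine tendsto_finset_sum _ fun i _ => ?_
  by_cases h : μ i = 0
  · simp only [h, mul_zero, Real.exp_zero, if_pos]
    exact tendsto_const_nhds
  · have hpos : 0 < μ i := lt_of_le_of_ne (hM.eigenvalues_nonneg i) (Ne.symm h)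
    simp only [h, if_neg, if_false]
    have h1 : Tendsto (fun t : ℝ => (2 * μ i) * t) atTop atTop :=
      Tendsto.const_mul_atTop (by positivity) tendsto_id
    have h2 : Tendsto (fun t : ℝ => -(2 * t) * μ i) atTop atBot := by
      have := (tendsto_neg_atTop_atBot.comp h1)
      refine this.congr fun t => ?_
      simp only [Function.comp_apply]
      ring
    exact Real.tendsto_exp_atBot.comp h2

open scoped MatrixOrder in
lemma aux_sqrt_exists (n : ℕ) (G : Matrix (Fin n) (Fin n) ℝ) (hG : G.PosDef) :
    ∃ S : Matrix (Fin n) (Fin n) ℝ, S * S = G ∧ Sᴴ = S :=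
  ⟨CFC.sqrt G, CFC.sqrt_mul_sqrt_self G (Matrix.nonneg_iff_posSemidef.mpr hG.posSemidef),
    (Matrix.nonneg_iff_posSemidef.mp (CFC.sqrt_nonneg G)).1⟩

/-- Corollary 3 (Expected loss and Hessian rank): for symmetric positive definite `G`,
symmetric positive semidefinite `H`, `σ > 0` and `Σ = σ²·G⁻¹` (so `Σ·G = σ²·I`),
`(4/σ²)·(1/4)·Tr(Σ·G·(I − exp(−2t·(G·H)))) → rank(H)` as `t → ∞`. -/
theorem expected_loss_hessian_rank (n : ℕ) (hn : 1 ≤ n)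
    (G H Sg : Matrix (Fin n) (Fin n) ℝ) (hG : G.PosDef) (hH : H.PosSemidef)
    (σ : ℝ) (hσ : 0 < σ) (hSg : Sg = σ ^ 2 • G⁻¹) :
    Tendsto
      (fun t : ℝ =>
        (4 / σ ^ 2) *
          ((1 / 4) * Matrix.trace (Sg * G * (1 - NormedSpace.exp ((-(2 * t)) • (G * H))))))
      atTop (nhds (H.rank : ℝ)) := by
  classical
  subst hSg
  have hσ2 : σ ^ 2 ≠ 0 := by positivity
  have hGdet : IsUnit G.det := isUnit_iff_ne_zero.mpr hG.det_pos.ne'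
  obtain ⟨S, hSS0, hSherm0⟩ := aux_sqrt_exists n G hG
  have hSS : S * S = G := hSS0
  have hSdetUnit : IsUnit S.det := by
    have : IsUnit (S.det * S.det) := by
      rw [← Matrix.det_mul, hSS]; exact hGdet
    exact isUnit_of_mul_isUnit_left this
  have hSherm : Sᴴ = S := hSherm0
  set M : Matrix (Fin n) (Fin n) ℝ := S * H * S with hMdef
  have hMpsd : M.PosSemidef := by
    have := hH.mul_mul_conjTranspose_same S
    rwa [hSherm] at this
  have hrankM : M.rank = H.rank := by
    rw [hMdef, Matrix.rank_mul_eq_left_of_isUnit_det S (S * H) hSdetUnit,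
      Matrix.rank_mul_eq_right_of_isUnit_det S H hSdetUnit]
  have hconj : G * H = S * M * S⁻¹ := by
    rw [hMdef]
    rw [show S * (S * H * S) * S⁻¹ = (S * S) * H * (S * S⁻¹) by noncomm_ring,
      Matrix.mul_nonsing_inv _ hSdetUnit, hSS, mul_one]
  have hSGid : σ ^ 2 • G⁻¹ * G = σ ^ 2 • (1 : Matrix (Fin n) (Fin n) ℝ) := by
    rw [Matrix.smul_mul, Matrix.nonsing_inv_mul _ hGdet]
  have hSunit : IsUnit S := (Matrix.isUnit_iff_isUnit_det S).mpr hSdetUnit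
  have keyfun : ∀ t : ℝ,
      (4 / σ ^ 2) *
        ((1 / 4) * Matrix.trace (σ ^ 2 • G⁻¹ * G * (1 - NormedSpace.exp ((-(2 * t)) • (G * H)))))
      = (n : ℝ) - Matrix.trace (NormedSpace.exp ((-(2 * t)) • M)) := by
    intro t
    have hE : NormedSpace.exp ((-(2 * t)) • (G * H))
        = S * NormedSpace.exp ((-(2 * t)) • M) * S⁻¹ := by
      rw [hconj, show (-(2 * t)) • (S * M * S⁻¹) = S * ((-(2 * t)) • M) * S⁻¹ by
        rw [Matrix.mul_smul, Matrix.smul_mul], Matrix.exp_conj S _ hSunit]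
    rw [hSGid, Matrix.smul_mul, one_mul, Matrix.trace_smul, hE]
    rw [Matrix.trace_sub, Matrix.trace_one]
    rw [Matrix.trace_mul_cycle, Matrix.nonsing_inv_mul _ hSdetUnit, one_mul]
    simp only [smul_eq_mul, Fintype.card_fin]
    field_simp
  simp only [keyfun]
  have := aux_trace_exp_tendsto n M hMpsd
  have h2 := tendsto_const_nhds (α := ℝ) (x := (n : ℝ)) (f := atTop) |>.sub this
  have : ((n : ℝ) - ((n : ℝ) - M.rank)) = (H.rank : ℝ) := by
    rw [hrankM]; ring
  rwa [this] at h2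
end

section
/- Let Σ be a symmetric positive definite n×n real matrix (n ≥ 1), and let R be a symmetric positive semidefinite n×n real matrix with R·R = Σ⁻¹ (i.e., R = Σ^{−1/2}). If Tr(Σ) > n, then sqrt(Tr(Σ⁻¹)/n)·Tr(Σ) > Tr(R). (Proposition 5: with preconditioners of equal Frobenius norm, the SGD-like preconditioner G₁ = sqrt(Tr(Σ⁻¹)/n)·I yields a strictly larger asymptotic expected loss Tr(G₁·Σ) than the Adam-like preconditioner G₂ = Σ^{−1/2}, whose asymptotic expected loss is Tr(Σ^{−1/2}).) -/
open Matrix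

lemma posdef_trace_pos' {n : ℕ} (hn : 1 ≤ n) {M : Matrix (Fin n) (Fin n) ℝ}
    (hM : M.PosDef) : 0 < Matrix.trace M := by
  have hpos : ∀ i, 0 < M i i := by
    intro i
    have h := hM.dotProduct_mulVec_pos (x := Pi.single i 1) (by
      intro h
      have := congrFun h i
      simp at this)
    simpa [dotProduct, mulVec, Pi.single_apply, Finset.sum_ite_eq, Finset.mul_sum] using h
  have : Nonempty (Fin n) := ⟨⟨0, hn⟩⟩
  exact Finset.sum_pos (fun i _ => hpos i) Finset.univ_nonempty

/-- Proposition 5: if `Tr(Σ) > n` then the SGD-like preconditioner yields a strictly larger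
asymptotic expected loss than the Adam-like preconditioner `Σ^{−1/2}`:
`sqrt(Tr(Σ⁻¹)/n)·Tr(Σ) > Tr(Σ^{−1/2})`. -/
theorem sgd_beats_adam (n : ℕ) (hn : 1 ≤ n)
    (Sg R : Matrix (Fin n) (Fin n) ℝ) (hSg : Sg.PosDef) (hR : R.PosSemidef)
    (hRR : R * R = Sg⁻¹) (hTr : (n : ℝ) < Matrix.trace Sg) :
    Matrix.trace R < Real.sqrt (Matrix.trace Sg⁻¹ / n) * Matrix.trace Sg := by
  have hnpos : (0 : ℝ) < n := by exact_mod_cast hn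
  set t := Matrix.trace Sg⁻¹ with ht
  have htpos : 0 < t := posdef_trace_pos' hn hSg.inv
  -- symmetry of R
  have hRsym : ∀ i j, R j i = R i j := by
    intro i j
    have := congrFun (congrFun hR.1 i) j
    simpa [conjTranspose_apply] using this
  -- trace Sg⁻¹ = sum of squares of entries of R
  have htrace2 : t = ∑ i, ∑ j, (R i j) ^ 2 := by
    rw [ht, ← hRR, Matrix.trace, Finset.sum_congr rfl]
    intro i _
    simp only [diag_apply, mul_apply]
    exact Finset.sum_congr rfl fun j _ => by rw [hRsym i j]; ring
  -- Cauchy-Schwarz: (trace R)^2 ≤ n * t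
  have hCS : (Matrix.trace R) ^ 2 ≤ n * t := by
    have h1 : (∑ i, R i i) ^ 2 ≤ (Finset.univ : Finset (Fin n)).card * ∑ i, (R i i) ^ 2 :=
      sq_sum_le_card_mul_sum_sq
    have h2 : ∑ i, (R i i) ^ 2 ≤ ∑ i, ∑ j, (R i j) ^ 2 := by
      apply Finset.sum_le_sum
      intro i _
      have : (R i i) ^ 2 ≤ ∑ j, (R i j) ^ 2 :=
        Finset.single_le_sum (f := fun j => (R i j) ^ 2) (fun j _ => sq_nonneg _) (Finset.mem_univ i)
      exact this
    calc (Matrix.trace R) ^ 2 = (∑ i, R i i) ^ 2 := by rw [Matrix.trace]; rfl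
      _ ≤ (Finset.univ : Finset (Fin n)).card * ∑ i, (R i i) ^ 2 := h1
      _ ≤ n * ∑ i, ∑ j, (R i j) ^ 2 := by
          rw [Finset.card_univ, Fintype.card_fin]
          exact mul_le_mul_of_nonneg_left h2 (by positivity)
      _ = n * t := by rw [htrace2]
  -- hence trace R ≤ sqrt (n * t) = n * sqrt (t / n)
  have hstep : Matrix.trace R ≤ (n : ℝ) * Real.sqrt (t / n) := by
    have h1 : Matrix.trace R ≤ Real.sqrt (n * t) := by
      calc Matrix.trace R ≤ |Matrix.trace R| := le_abs_self _
        _ = Real.sqrt ((Matrix.trace R) ^ 2) := (Real.sqrt_sq_eq_abs _).symm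
        _ ≤ Real.sqrt (n * t) := Real.sqrt_le_sqrt hCS
    have h2 : Real.sqrt (n * t) = (n : ℝ) * Real.sqrt (t / n) := by
      rw [← Real.sqrt_sq hnpos.le, ← Real.sqrt_mul (by positivity)]
      congr 1
      field_simp
      rw [Real.sq_sqrt (by positivity)]
    linarith [h2 ▸ h1]
  have hsq : 0 < Real.sqrt (t / n) := Real.sqrt_pos.mpr (by positivity)
  calc Matrix.trace R ≤ (n : ℝ) * Real.sqrt (t / n) := hstep
    _ < Matrix.trace Sg * Real.sqrt (t / n) := by
        exact mul_lt_mul_of_pos_right hTr hsq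
    _ = Real.sqrt (t / n) * Matrix.trace Sg := mul_comm _ _
end

section
/- Let G be a symmetric positive definite n×n real matrix and H a symmetric n×n real matrix such that there exists a real vector u with uᵀ·H·u < 0. Then G·H has a negative real eigenvalue: there exist a real number λ < 0 and a nonzero real vector v with (G·H)·v = λ·v. (Lemma A.4.) -/
open Matrix

/-- Lemma A.4: if `G` is symmetric positive definite and `H` is symmetric with `uᵀ·H·u < 0`
for some vector `u`, then `G·H` has a negative real eigenvalue. -/
theorem GH_has_negative_eigenvalue (n : ℕ) (hn : 1 ≤ n)
    (G H : Matrix (Fin n) (Fin n) ℝ) (hG : G.PosDef) (hH : H.IsHermitian)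
    (u : Fin n → ℝ) (hu : u ⬝ᵥ (H *ᵥ u) < 0) :
    ∃ (lam : ℝ) (v : Fin n → ℝ), lam < 0 ∧ v ≠ 0 ∧ (G * H) *ᵥ v = lam • v := by
  classical
  set S := (open scoped MatrixOrder in CFC.sqrt G) with hSdef
  have hSherm : S.IsHermitian := open scoped MatrixOrder in (CFC.sqrt_nonneg G).posSemidef.1
  have hSS : S * S = G := open scoped MatrixOrder in CFC.sqrt_mul_sqrt_self G hG.posSemidef.nonneg
  -- S is invertible
  have hdetG : G.det ≠ 0 := hG.det_pos.ne'
  have hdetS : S.det ≠ 0 := by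
    intro h
    apply hdetG
    rw [← hSS, det_mul, h, mul_zero]
  have hSunit : IsUnit S.det := hdetS.isUnit
  have hSinv : S * S⁻¹ = 1 := mul_nonsing_inv S hSunit
  have hSinv' : S⁻¹ * S = 1 := nonsing_inv_mul S hSunit
  set M := S * H * S with hMdef
  have hMherm : M.IsHermitian := by
    have : Mᴴ = Sᴴ * Hᴴ * Sᴴ := by
      simp [hMdef, conjTranspose_mul, mul_assoc]
    rw [IsHermitian, this, hSherm.eq, hH.eq]
  -- M is not positive semidefinite
  have hnotpsd : ¬ M.PosSemidef := by
    intro hpsd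
    have hw := hpsd.dotProduct_mulVec_nonneg (S⁻¹ *ᵥ u)
    have hsym : Sᵀ = S := by simpa using hSherm.eq
    have key : star (S⁻¹ *ᵥ u) ⬝ᵥ (M *ᵥ (S⁻¹ *ᵥ u)) = u ⬝ᵥ (H *ᵥ u) := by
      have hSw : S *ᵥ (S⁻¹ *ᵥ u) = u := by
        rw [mulVec_mulVec, hSinv, one_mulVec]
      have : M *ᵥ (S⁻¹ *ᵥ u) = S *ᵥ (H *ᵥ u) := by
        rw [hMdef, ← mulVec_mulVec, ← mulVec_mulVec, hSw]
      rw [this]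
      have hstar : star (S⁻¹ *ᵥ u) = S⁻¹ *ᵥ u := by
        ext i; simp
      rw [hstar, dotProduct_mulVec, ← mulVec_transpose, hsym, hSw]
    rw [key] at hw
    exact absurd hw (not_le.mpr hu)
  -- hence some eigenvalue of M is negative
  have hexist : ∃ i, hMherm.eigenvalues i < 0 := by
    by_contra h
    push_neg at h
    exact hnotpsd (hMherm.posSemidef_iff_eigenvalues_nonneg.mpr (fun j => h j))
  obtain ⟨i, hi⟩ := hexist
  set x : Fin n → ℝ := ⇑(hMherm.eigenvectorBasis i) with hxdef
  have hx : M *ᵥ x = hMherm.eigenvalues i • x := hMherm.mulVec_eigenvectorBasis i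
  have hxne : x ≠ 0 := by
    intro h
    have := (hMherm.eigenvectorBasis).orthonormal.1 i
    rw [show (hMherm.eigenvectorBasis i : EuclideanSpace ℝ (Fin n)) = 0 from (WithLp.ofLp_eq_zero 2).mp h, norm_zero] at this
    norm_num at this
  refine ⟨hMherm.eigenvalues i, S *ᵥ x, hi, ?_, ?_⟩
  · intro h
    apply hxne
    have : S⁻¹ *ᵥ (S *ᵥ x) = x := by
      rw [mulVec_mulVec, hSinv', one_mulVec]
    rw [h, mulVec_zero] at this
    exact this.symm
  · calc (G * H) *ᵥ (S *ᵥ x) = S *ᵥ (M *ᵥ x) := by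
          rw [← hSS, hMdef]
          rw [mulVec_mulVec, mulVec_mulVec, mul_assoc, mul_assoc, mul_assoc S H S]
        _ = hMherm.eigenvalues i • (S *ᵥ x) := by
          rw [hx, mulVec_smul]
end

section
/- Let G be a symmetric positive definite n×n real matrix, let Σ = (G·G)⁻¹ (i.e., the preconditioner is G = Σ^{−1/2}), and let H be any n×n real matrix. Then the function F(t) = (1/4)·Tr(Σ·G·(I − exp(−2t·(G·H)))) has derivative (1/2)·Tr(H) at t = 0. (Equation (14): for the preconditioner G = Σ^{−1/2}, the initial slope of the expected loss is proportional to the Hessian trace.) -/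
open Matrix

attribute [local instance] Matrix.linftyOpNormedAddCommGroup Matrix.linftyOpNormedRing
  Matrix.linftyOpNormedSpace Matrix.linftyOpNormedAlgebra

/-- Equation (14): for the preconditioner `G = Σ^{−1/2}` (i.e. `Σ = (G·G)⁻¹`), the initial
slope of the expected loss `F(t) = (1/4)·Tr(Σ·G·(I − exp(−2t·(G·H))))` at `t = 0` is
`(1/2)·Tr(H)`. -/
theorem hasDerivAt_expected_loss_trace (n : ℕ) (hn : 1 ≤ n)
    (G Sg H : Matrix (Fin n) (Fin n) ℝ) (hG : G.PosDef) (hSg : Sg = (G * G)⁻¹) :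
    HasDerivAt
      (fun t : ℝ =>
        (1 / 4) * Matrix.trace (Sg * G * (1 - NormedSpace.exp ((-(2 * t)) • (G * H)))))
      ((1 / 2) * Matrix.trace H) 0 := by
  set A := G * H with hA
  have hexp0 : HasDerivAt (fun u : ℝ => NormedSpace.exp (u • A))
      (NormedSpace.exp ((0 : ℝ) • A) * A) (-(2 * (0:ℝ))) := by
    have h0 := hasDerivAt_exp_smul_const (𝕂 := ℝ) A (0 : ℝ)
    simp at h0
    simp
    exact h0
  have hg : HasDerivAt (fun t : ℝ => -(2 * t)) (-2 : ℝ) 0 := by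
    simpa using ((hasDerivAt_id (0:ℝ)).const_mul (2:ℝ)).fun_neg
  have hf : HasDerivAt (fun t : ℝ => NormedSpace.exp ((-(2 * t)) • A))
      ((-2 : ℝ) • A) 0 := by
    have := hexp0.scomp (0 : ℝ) hg
    simp [Function.comp_def] at this
    simp
    exact this
  have hsub : HasDerivAt
      (fun t : ℝ => (1 : Matrix (Fin n) (Fin n) ℝ) - NormedSpace.exp ((-(2 * t)) • A))
      ((2 : ℝ) • A) 0 := by
    have h1 := hf.const_sub 1
    simp at h1
    simp
    exact h1
  let L : Matrix (Fin n) (Fin n) ℝ →ₗ[ℝ] ℝ :=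
    (Matrix.traceLinearMap (Fin n) ℝ ℝ).comp (LinearMap.mulLeft ℝ (Sg * G))
  have hL : HasDerivAt
      (fun t : ℝ => Matrix.trace (Sg * G * (1 - NormedSpace.exp ((-(2 * t)) • A))))
      ((2 : ℝ) * Matrix.trace (Sg * (G * A))) 0 := by
    have := (L.toContinuousLinearMap.hasFDerivAt
      (x := (1 : Matrix (Fin n) (Fin n) ℝ) - NormedSpace.exp ((-(2 * (0:ℝ))) • A))).comp_hasDerivAt
      (0 : ℝ) hsub
    simp [L, Function.comp_def, Matrix.mul_assoc] at this
    simp [Matrix.mul_assoc]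
    refine this.congr_deriv ?_
    change (traceLinearMap (Fin n) ℝ ℝ ∘ₗ LinearMap.mulLeft ℝ Sg ∘ₗ LinearMap.mulLeft ℝ G) (2 • A) = _
    simp [Matrix.trace_smul, Matrix.mul_smul]
  have hmain := hL.const_mul (1 / 4 : ℝ)
  have hval : (1 / 4 : ℝ) * ((2 : ℝ) * Matrix.trace (Sg * (G * A))) =
      (1 / 2) * Matrix.trace H := by
    have hdet : IsUnit (G * G).det := by
      rw [Matrix.det_mul]
      exact (mul_pos hG.det_pos hG.det_pos).ne'.isUnit
    have h1 : Sg * (G * A) = H := by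
      rw [hSg, hA, ← Matrix.mul_assoc G G H, ← Matrix.mul_assoc,
        Matrix.nonsing_inv_mul _ hdet, Matrix.one_mul]
    rw [h1]; ring
  rw [← hval]
  exact hmain
end
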